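/- The direct limit of the system ℤ² → ℤ² → ⋯ with each map given by the matrix [[3,1],[1,3]] splits as a direct sum ℤ[1/4] ⊕ ℤ[1/2], with the summands generated by the classes of the eigenvectors (1,1) (eigenvalue 4) and (1,−1) (eigenvalue 2). -/

import Mathlib

noncomputable section

/-- The subgroup `ℤ[1/p] ⊆ ℚ` of fractions with denominator a power of `p`. -/
def zOneDiv (p : ℕ) : AddSubgroup ℚ :=
  AddSubgroup.closure {q : ℚ | ∃ n : ℕ, q = 1 / (p : ℚ) ^ n}

/-- The matrix `[[3,1],[1,3]]` as an endomorphism of `ℤ²`. -/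
def sigma : Module.End ℤ (Fin 2 → ℤ) := Matrix.toLin' !![3, 1; 1, 3]

/-- The constant directed system `ℤ² → ℤ² → ⋯` with transition map `σ`. -/
def fSys : ∀ i j : ℕ, i ≤ j → (Fin 2 → ℤ) →ₗ[ℤ] (Fin 2 → ℤ) :=
  fun i j _ => sigma ^ (j - i)

/-- The direct limit `lim→(ℤ², σ)`. -/
def L : Type := Module.DirectLimit (fun _ : ℕ => Fin 2 → ℤ) fSys

instance : AddCommGroup L := Module.DirectLimit.addCommGroup _ fSys

/-- The class in the direct limit of a vector at stage `k`. -/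
def ofL (k : ℕ) (v : Fin 2 → ℤ) : L :=
  Module.DirectLimit.of ℤ ℕ (fun _ : ℕ => Fin 2 → ℤ) fSys k v

/-- `1/4^k ∈ ℤ[1/2]`. -/
def quarterPow (k : ℕ) : ↥(zOneDiv 2) :=
  ⟨1 / (4 : ℚ) ^ k, AddSubgroup.subset_closure ⟨2 * k, by rw [pow_mul]; norm_num⟩⟩

/-- `1/2^k ∈ ℤ[1/2]`. -/
def halfPow (k : ℕ) : ↥(zOneDiv 2) :=
  ⟨1 / (2 : ℚ) ^ k, AddSubgroup.subset_closure ⟨k, rfl⟩⟩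

lemma sigma_apply (v : Fin 2 → ℤ) : sigma v = ![3 * v 0 + v 1, v 0 + 3 * v 1] := by
  funext i
  fin_cases i <;>
    simp [sigma, Matrix.toLin'_apply, Matrix.mulVec, dotProduct, Fin.sum_univ_two]

def gg (k : ℕ) : (Fin 2 → ℤ) →ₗ[ℤ] ℚ × ℚ where
  toFun v := (((v 0 + v 1 : ℤ) : ℚ) / (2 * 4 ^ k), ((v 0 - v 1 : ℤ) : ℚ) / (2 * 2 ^ k))
  map_add' v w := by
    apply Prod.ext <;> · simp only [Pi.add_apply, Prod.fst_add, Prod.snd_add]; push_cast; ring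
  map_smul' c v := by
    rw [Prod.smul_mk]
    apply Prod.ext <;>
      · simp only [Pi.smul_apply, smul_eq_mul, RingHom.id_apply, zsmul_eq_mul]
        push_cast; ring

lemma gg_succ (k : ℕ) (v : Fin 2 → ℤ) : gg (k + 1) (sigma v) = gg k v := by
  rw [sigma_apply]
  apply Prod.ext <;>
    · simp only [gg, LinearMap.coe_mk, AddHom.coe_mk, Matrix.cons_val_zero, Matrix.cons_val_one,
        Matrix.head_cons, pow_succ]
      push_cast
      rw [div_eq_div_iff (by positivity) (by positivity)]
      ring

lemma gg_pow (n : ℕ) : ∀ (k : ℕ) (v : Fin 2 → ℤ), gg (k + n) ((sigma ^ n) v) = gg k v := by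
  induction n with
  | zero => intro k v; simp
  | succ n ih =>
      intro k v
      have h : (sigma ^ (n + 1)) v = (sigma ^ n) (sigma v) := by
        rw [pow_succ]; rfl
      rw [h, show k + (n + 1) = (k + 1) + n by omega, ih (k + 1) (sigma v), gg_succ]

lemma hg : ∀ i j hij (v : Fin 2 → ℤ), gg j (fSys i j hij v) = gg i v := by
  intro i j hij v
  have h := gg_pow (j - i) i v
  rwa [Nat.add_sub_cancel' hij] at h

def FF : L →ₗ[ℤ] ℚ × ℚ := Module.DirectLimit.lift ℤ ℕ (fun _ : ℕ => Fin 2 → ℤ) fSys gg hg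

lemma FF_of (k : ℕ) (v : Fin 2 → ℤ) : FF (ofL k v) = gg k v :=
  Module.DirectLimit.lift_of gg hg v

lemma mem_zOneDiv (a : ℤ) (m : ℕ) : (a : ℚ) / 2 ^ m ∈ zOneDiv 2 := by
  have h1 : (1 : ℚ) / 2 ^ m ∈ zOneDiv 2 := AddSubgroup.subset_closure ⟨m, by norm_num⟩
  have h2 := AddSubgroup.zsmul_mem _ h1 a
  have h3 : a • ((1 : ℚ) / 2 ^ m) = (a : ℚ) / 2 ^ m := by
    rw [zsmul_eq_mul]; ring
  rwa [h3] at h2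

lemma repr_zOneDiv {q : ℚ} (hq : q ∈ zOneDiv 2) : ∃ (a : ℤ) (m : ℕ), q = (a : ℚ) / 2 ^ m := by
  induction hq using AddSubgroup.closure_induction with
  | mem x hx => obtain ⟨n, rfl⟩ := hx; exact ⟨1, n, by push_cast; norm_num⟩
  | zero => exact ⟨0, 0, by norm_num⟩
  | add x y _ _ hx hy =>
      obtain ⟨a, m, rfl⟩ := hx
      obtain ⟨b, n, rfl⟩ := hy
      refine ⟨a * 2 ^ n + b * 2 ^ m, m + n, ?_⟩
      push_cast
      rw [div_add_div _ _ (by positivity) (by positivity), pow_add]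
      ring_nf
  | neg x _ hx =>
      obtain ⟨a, m, rfl⟩ := hx
      exact ⟨-a, m, by push_cast; ring⟩

lemma two_pow_two (k : ℕ) : ((4 : ℚ) ^ k) = 2 ^ (2 * k) := by rw [pow_mul]; norm_num

lemma memFF (x : L) : (FF x).1 ∈ zOneDiv 2 ∧ (FF x).2 ∈ zOneDiv 2 := by
  refine Module.DirectLimit.induction_on x ?_
  intro k v
  have h : FF (ofL k v) = gg k v := FF_of k v
  rw [show Module.DirectLimit.of ℤ ℕ (fun _ : ℕ => Fin 2 → ℤ) fSys k v = ofL k v from rfl, h]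
  constructor
  · have : (gg k v).1 = ((v 0 + v 1 : ℤ) : ℚ) / 2 ^ (2 * k + 1) := by
      simp only [gg, LinearMap.coe_mk, AddHom.coe_mk]
      rw [pow_succ, pow_mul]; norm_num; ring_nf
    rw [this]; exact mem_zOneDiv _ _
  · have : (gg k v).2 = ((v 0 - v 1 : ℤ) : ℚ) / 2 ^ (k + 1) := by
      simp only [gg, LinearMap.coe_mk, AddHom.coe_mk]
      rw [pow_succ]; ring_nf
    rw [this]; exact mem_zOneDiv _ _

def EE : L →+ ↥(zOneDiv 2) × ↥(zOneDiv 2) where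
  toFun x := (⟨(FF x).1, (memFF x).1⟩, ⟨(FF x).2, (memFF x).2⟩)
  map_zero' := by
    apply Prod.ext <;> apply Subtype.ext <;> simp [map_zero]
  map_add' x y := by
    apply Prod.ext <;> apply Subtype.ext <;> simp [map_add]

lemma EE_inj : Function.Injective EE := by
  rw [injective_iff_map_eq_zero]
  intro x hx
  obtain ⟨k, v, rfl⟩ := Module.DirectLimit.exists_of x
  have h1 : (FF (ofL k v)).1 = 0 := by
    have := congrArg (fun p => (p.1 : ℚ)) hx
    simpa [EE, ofL] using this
  have h2 : (FF (ofL k v)).2 = 0 := by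
    have := congrArg (fun p => (p.2 : ℚ)) hx
    simpa [EE, ofL] using this
  rw [FF_of] at h1 h2
  simp only [gg, LinearMap.coe_mk, AddHom.coe_mk] at h1 h2
  rw [div_eq_zero_iff] at h1 h2
  have hn1 : (2 : ℚ) * 4 ^ k ≠ 0 := by positivity
  have hn2 : (2 : ℚ) * 2 ^ k ≠ 0 := by positivity
  have e1 : v 0 + v 1 = 0 := by
    rcases h1 with h | h
    · exact_mod_cast h
    · exact absurd h hn1
  have e2 : v 0 - v 1 = 0 := by
    rcases h2 with h | h
    · exact_mod_cast h
    · exact absurd h hn2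
  have hv : v = 0 := by
    funext i; fin_cases i <;> simp <;> omega
  rw [show Module.DirectLimit.of ℤ ℕ (fun _ : ℕ => Fin 2 → ℤ) fSys k v = ofL k v from rfl,
    ofL, hv, map_zero]
  rfl

lemma EE_surj : Function.Surjective EE := by
  rintro ⟨⟨s, hs⟩, ⟨t, ht⟩⟩
  obtain ⟨a, m, rfl⟩ := repr_zOneDiv hs
  obtain ⟨b, n, rfl⟩ := repr_zOneDiv ht
  set k := max m n with hk
  set A : ℤ := a * 2 ^ (2 * k - m) with hA
  set B : ℤ := b * 2 ^ (k - n) with hB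
  refine ⟨ofL k ![A + B, A - B], ?_⟩
  have h1 : (2 : ℚ) ^ (2 * k - m) * 2 ^ m = 2 ^ (2 * k) := by
    rw [← pow_add]; congr 1; omega
  have h2 : (2 : ℚ) ^ (k - n) * 2 ^ n = 2 ^ k := by
    rw [← pow_add]; congr 1; omega
  apply Prod.ext <;> apply Subtype.ext <;>
    simp only [EE, AddMonoidHom.coe_mk, ZeroHom.coe_mk, FF_of, gg, LinearMap.coe_mk,
      AddHom.coe_mk, Matrix.cons_val_zero, Matrix.cons_val_one, Matrix.head_cons]
  · rw [two_pow_two, div_eq_div_iff (by positivity) (by positivity)]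
    push_cast [hA, hB]
    linear_combination (2 * (a : ℚ)) * h1
  · rw [div_eq_div_iff (by positivity) (by positivity)]
    push_cast [hA, hB]
    linear_combination (2 * (b : ℚ)) * h2

/-- The direct limit of `ℤ² → ℤ² → ⋯` along `[[3,1],[1,3]]` splits as `ℤ[1/4] ⊕ ℤ[1/2]`,
with summands generated by the classes of the eigenvectors `(1,1)` (eigenvalue 4) and
`(1,−1)` (eigenvalue 2): there is an isomorphism sending the class of `(1,1)` at stage `k`
to `(1/4^k, 0)` and the class of `(1,−1)` at stage `k` to `(0, 1/2^k)`. -/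
theorem stmt5 :
    ∃ e : L ≃+ ↥(zOneDiv 2) × ↥(zOneDiv 2),
      ∀ k : ℕ,
        e (ofL k ![1, 1]) = (quarterPow k, 0) ∧
        e (ofL k ![1, -1]) = (0, halfPow k) := by
  refine ⟨AddEquiv.ofBijective EE ⟨EE_inj, EE_surj⟩, fun k => ?_⟩
  constructor <;>
    · apply Prod.ext <;> apply Subtype.ext <;>
        simp only [AddEquiv.ofBijective_apply, EE, AddMonoidHom.coe_mk, ZeroHom.coe_mk, FF_of,
          gg, LinearMap.coe_mk, AddHom.coe_mk, Matrix.cons_val_zero, Matrix.cons_val_one,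
          Matrix.head_cons, quarterPow, halfPow] <;>
        push_cast <;> ring_nf
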